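/- Let P be a subset of the plane ℝ², let v be a point of P, and let I ⊆ P be a convex set such that v sees every point of I within P (i.e., for every x ∈ I the segment from v to x is contained in P). Then every point u lying in the convex hull of {v} ∪ I sees every point of I within P: for every u in the convex hull of {v} ∪ I and every x ∈ I, the segment from u to x is contained in P. -/

import Mathlib

/-- If `v ∈ P` sees every point of a convex set `I ⊆ P` within `P`, then every
point of the convex hull of `{v} ∪ I` sees every point of `I` within `P`. -/
theorem mem_convexHull_sees_all_of_convex
    (P : Set (ℝ × ℝ)) (v : ℝ × ℝ) (hv : v ∈ P)
    (I : Set (ℝ × ℝ)) (hIP : I ⊆ P) (hIconv : Convex ℝ I)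
    (hsees : ∀ x ∈ I, segment ℝ v x ⊆ P) :
    ∀ u ∈ convexHull ℝ ({v} ∪ I), ∀ x ∈ I, segment ℝ u x ⊆ P := by
  rcases I.eq_empty_or_nonempty with rfl | hne
  · intro u _ x hx; exact absurd hx (Set.notMem_empty x)
  intro u hu x hx
  rw [convexHull_union (Set.singleton_nonempty v) hne, convexHull_singleton,
    hIconv.convexHull_eq, mem_convexJoin] at hu
  obtain ⟨v', hv', y, hy, hu⟩ := hu
  rw [Set.mem_singleton_iff] at hv'
  have hvv : v = v' := hv'.symm
  subst hvv
  obtain ⟨c, d, hc, hd, hcd, rfl⟩ := hu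
  intro p hp
  obtain ⟨a, b, ha, hb, hab, rfl⟩ := hp
  rcases eq_or_lt_of_le (by positivity : (0:ℝ) ≤ a * d + b) with h0 | hpos
  · -- a*d + b = 0, so b = 0 and a*d = 0; point is (a*c) • v, with a*c = 1
    have hb0 : b = 0 := by nlinarith [mul_nonneg ha hd]
    have had : a * d = 0 := by nlinarith [mul_nonneg ha hd]
    have ha1 : a = 1 := by linarith
    have hd0 : d = 0 := by simpa [ha1] using had
    have : a • (c • v + d • y) + b • x = v := by
      rw [ha1, hb0, hd0]
      have hc1 : c = 1 := by linarith
      simp [hc1]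
    rw [this]; exact hv
  · set t : ℝ := a * d + b with ht
    have hz : ((a * d) / t) • y + (b / t) • x ∈ I := by
      apply hIconv hy hx
      · positivity
      · positivity
      · field_simp; exact ht.symm
    set z := ((a * d) / t) • y + (b / t) • x with hzdef
    have key : a • (c • v + d • y) + b • x = (a * c) • v + t • z := by
      rw [hzdef]
      match_scalars <;> field_simp
    rw [key]
    apply hsees z hz
    exact ⟨a * c, t, by positivity, le_of_lt hpos, by nlinarith, rfl⟩
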